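/- Let M be a topological space, let E, F, G be finite-dimensional inner product spaces over 𝕜 ∈ {ℝ, ℂ}, and let B : M → (E →L[𝕜] F →L[𝕜] G) be a continuous family of bilinear maps. Suppose (x_n)_{n∈ℕ} is a sequence in M converging to x ∈ M, and (U_n), (W_n), (Z_n) are sequences of subspaces of E, F, G respectively such that for every n and all u ∈ U_n, w ∈ W_n one has B(x_n)(u)(w) ∈ Z_n. If U_n → U, W_n → W and Z_n → Z in the gap metric (i.e. the corresponding orthogonal projections converge in operator norm), then B(x)(u)(w) ∈ Z for all u ∈ U and w ∈ W. -/

import Mathlib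

open FiniteDimensional Filter

/-- The orthogonal projection onto a subspace `V` of a finite-dimensional inner product
space, regarded as a continuous linear endomorphism. -/
noncomputable def orthProjection {𝕜 E : Type*} [RCLike 𝕜] [NormedAddCommGroup E]
    [InnerProductSpace 𝕜 E] [FiniteDimensional 𝕜 E] (V : Submodule 𝕜 E) : E →L[𝕜] E :=
  V.subtypeL.comp V.orthogonalProjectionOnto

lemma orthProjection_mem {𝕜 E : Type*} [RCLike 𝕜] [NormedAddCommGroup E]
    [InnerProductSpace 𝕜 E] [FiniteDimensional 𝕜 E] (V : Submodule 𝕜 E) (v : E) :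
    orthProjection V v ∈ V := by
  simp [orthProjection]

lemma orthProjection_eq_self {𝕜 E : Type*} [RCLike 𝕜] [NormedAddCommGroup E]
    [InnerProductSpace 𝕜 E] [FiniteDimensional 𝕜 E] {V : Submodule 𝕜 E} {v : E}
    (hv : v ∈ V) : orthProjection V v = v := by
  exact V.starProjection_eq_self_iff.mpr hv

lemma tendsto_proj {𝕜 E : Type*} [RCLike 𝕜] [NormedAddCommGroup E]
    [InnerProductSpace 𝕜 E] [FiniteDimensional 𝕜 E] {Vs : ℕ → Submodule 𝕜 E}
    {V : Submodule 𝕜 E}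
    (h : Tendsto (fun n => ‖orthProjection (Vs n) - orthProjection V‖) atTop (nhds 0)) :
    Tendsto (fun n => orthProjection (Vs n)) atTop (nhds (orthProjection V)) :=
  tendsto_iff_norm_sub_tendsto_zero.mpr h


lemma my_clm_apply {𝕜 A B : Type*} [RCLike 𝕜] [NormedAddCommGroup A] [NormedSpace 𝕜 A]
    [NormedAddCommGroup B] [NormedSpace 𝕜 B] {l : Filter ℕ}
    {f : ℕ → A →L[𝕜] B} {g : ℕ → A} {T : A →L[𝕜] B} {a : A}
    (hf : Tendsto f l (nhds T)) (hg : Tendsto g l (nhds a)) :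
    Tendsto (fun n => f n (g n)) l (nhds (T a)) := by
  have hc : Continuous fun p : (A →L[𝕜] B) × A => p.1 p.2 :=
    isBoundedBilinearMap_apply.continuous
  exact (hc.tendsto (T, a)).comp (hf.prodMk_nhds hg)

/-- Stability under limits of a continuous family of bilinear maps: if
`B (x n) (U n) (W n) ⊆ Z n` along a sequence `x n → x` and `U n → U`, `W n → W`, `Z n → Z`
in the gap metric, then `B x U W ⊆ Z`. -/
theorem bilinear_gap_limit_mem {𝕜 E F G M : Type*} [RCLike 𝕜]
    [NormedAddCommGroup E] [InnerProductSpace 𝕜 E] [FiniteDimensional 𝕜 E]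
    [NormedAddCommGroup F] [InnerProductSpace 𝕜 F] [FiniteDimensional 𝕜 F]
    [NormedAddCommGroup G] [InnerProductSpace 𝕜 G] [FiniteDimensional 𝕜 G]
    [TopologicalSpace M]
    (B : M → (E →L[𝕜] F →L[𝕜] G)) (hB : Continuous B)
    (x : M) (xs : ℕ → M) (hxs : Tendsto xs atTop (nhds x))
    (Us : ℕ → Submodule 𝕜 E) (Ws : ℕ → Submodule 𝕜 F) (Zs : ℕ → Submodule 𝕜 G)
    (hmem : ∀ n, ∀ u ∈ Us n, ∀ w ∈ Ws n, B (xs n) u w ∈ Zs n)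
    (U : Submodule 𝕜 E) (W : Submodule 𝕜 F) (Z : Submodule 𝕜 G)
    (hU : Tendsto (fun n => ‖orthProjection (Us n) - orthProjection U‖) atTop (nhds 0))
    (hW : Tendsto (fun n => ‖orthProjection (Ws n) - orthProjection W‖) atTop (nhds 0))
    (hZ : Tendsto (fun n => ‖orthProjection (Zs n) - orthProjection Z‖) atTop (nhds 0)) :
    ∀ u ∈ U, ∀ w ∈ W, B x u w ∈ Z := by
  intro u hu w hw
  -- approximating sequences
  have hun : Tendsto (fun n => orthProjection (Us n) u) atTop (nhds u) := by
    have := my_clm_apply (tendsto_proj hU) (tendsto_const_nhds (x := u))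
    simpa [orthProjection_eq_self hu] using this
  have hwn : Tendsto (fun n => orthProjection (Ws n) w) atTop (nhds w) := by
    have := my_clm_apply (tendsto_proj hW) (tendsto_const_nhds (x := w))
    simpa [orthProjection_eq_self hw] using this
  have hBn : Tendsto (fun n => B (xs n)) atTop (nhds (B x)) := (hB.tendsto x).comp hxs
  have hg : Tendsto (fun n => B (xs n) (orthProjection (Us n) u) (orthProjection (Ws n) w))
      atTop (nhds (B x u w)) := my_clm_apply (my_clm_apply hBn hun) hwn
  have hfix : ∀ n, orthProjection (Zs n)
      (B (xs n) (orthProjection (Us n) u) (orthProjection (Ws n) w)) =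
      B (xs n) (orthProjection (Us n) u) (orthProjection (Ws n) w) := fun n =>
    orthProjection_eq_self (hmem n _ (orthProjection_mem _ _) _ (orthProjection_mem _ _))
  have hlim : Tendsto (fun n => orthProjection (Zs n)
      (B (xs n) (orthProjection (Us n) u) (orthProjection (Ws n) w)))
      atTop (nhds (orthProjection Z (B x u w))) := my_clm_apply (tendsto_proj hZ) hg
  have heq : orthProjection Z (B x u w) = B x u w := by
    refine tendsto_nhds_unique ?_ hg
    simpa only [hfix] using hlim
  rw [← heq]
  exact orthProjection_mem _ _
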